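/- If a probabilistic inference is simultaneously consistent and exactly calibrated, the sampling family is reducible to a location family: let f : ℝ × ℝ → ℝ be a twice continuously differentiable function with f(x,θ) > 0 and ∫_ℝ f(x,θ) dx = 1 for every θ, and let F(x,θ) = ∫_{−∞}^x f(t,θ) dt be its distribution function. Suppose there exists a continuous function π : ℝ → ℝ with π(θ) > 0 such that for every x the integral ∫ π(θ)f(x,θ) dθ is finite and strictly positive and the posterior density assigned via the Consistency Theorem is exactly calibrated, i.e. π(θ)·f(x,θ) / ∫ π(θ')·f(x,θ') dθ' = −∂F/∂θ(x,θ) for all x, θ ∈ ℝ. Then there exist strictly monotone differentiable functions u, v : ℝ → ℝ and a nonnegative function φ : ℝ → ℝ with ∫_ℝ φ = 1 such that f(x,θ) = φ(u(x) − v(θ))·u'(x) for all x, θ; that is, after the separate one-to-one transformations y = u(x) of the sample space and μ = v(θ) of the parameter space, the sampling density takes the pure location form φ(y − μ). -/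

import Mathlib

open MeasureTheory
open intervalIntegral Set Filter Asymptotics

lemma key_hasDerivAt (f : ℝ → ℝ → ℝ) (hfc : Continuous fun q : ℝ × ℝ => f q.1 q.2)
    {h : ℝ → ℝ} {θ₀ h' : ℝ} (hh : HasDerivAt h h' θ₀) :
    HasDerivAt (fun θ => ∫ t in h θ₀..h θ, f t θ) (f (h θ₀) θ₀ * h') θ₀ := by
  set x₀ := h θ₀ with hx₀
  set c := f x₀ θ₀ with hc
  rw [hasDerivAt_iff_isLittleO]
  have hB : (fun θ => c * (h θ - h θ₀ - (θ - θ₀) * h')) =o[nhds θ₀] fun θ => θ - θ₀ := by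
    have := hasDerivAt_iff_isLittleO.1 hh
    simpa [smul_eq_mul] using this.const_mul_left c
  have hA0 : (fun θ => (∫ t in x₀..h θ, f t θ) - (h θ - x₀) * c) =o[nhds θ₀]
      fun θ => h θ - x₀ := by
    rw [isLittleO_iff]
    intro ε hε
    have hcont : ContinuousAt (fun q : ℝ × ℝ => f q.1 q.2) (x₀, θ₀) := hfc.continuousAt
    rcases Metric.continuousAt_iff.1 hcont ε hε with ⟨δ, hδ, hball⟩
    have hh1 : ∀ᶠ θ in nhds θ₀, |h θ - x₀| < δ := by
      have : ContinuousAt h θ₀ := hh.continuousAt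
      have := Metric.continuousAt_iff.1 this δ hδ
      rcases this with ⟨δ', hδ', hb⟩
      filter_upwards [Metric.ball_mem_nhds θ₀ hδ'] with θ hθ
      simpa [Real.dist_eq] using hb hθ
    have hh2 : ∀ᶠ θ in nhds θ₀, |θ - θ₀| < δ := by
      filter_upwards [Metric.ball_mem_nhds θ₀ hδ] with θ hθ
      simpa [Real.dist_eq] using hθ
    filter_upwards [hh1, hh2] with θ h1 h2
    have hsub : ∀ t ∈ Set.uIoc x₀ (h θ), ‖f t θ - c‖ ≤ ε := by
      intro t ht
      have ht' : t ∈ Set.uIcc x₀ (h θ) := Set.uIoc_subset_uIcc ht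
      have htx : |t - x₀| ≤ |h θ - x₀| := by
        rw [abs_le]
        rcases Set.mem_uIcc.1 ht' with ⟨ha, hb⟩ | ⟨ha, hb⟩ <;>
          exact ⟨by linarith [abs_nonneg (h θ - x₀), le_abs_self (h θ - x₀),
              neg_abs_le (h θ - x₀)],
            by linarith [abs_nonneg (h θ - x₀), le_abs_self (h θ - x₀),
              neg_abs_le (h θ - x₀)]⟩
      have hd : dist ((t, θ) : ℝ × ℝ) (x₀, θ₀) < δ := by
        rw [Prod.dist_eq]
        simp only [Real.dist_eq]
        exact max_lt (lt_of_le_of_lt htx h1) h2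
      exact le_of_lt (hball hd)
    have hint : (∫ t in x₀..h θ, f t θ) - (h θ - x₀) * c
        = ∫ t in x₀..h θ, (f t θ - c) := by
      rw [intervalIntegral.integral_sub]
      · simp [mul_comm]
      · exact (hfc.comp (continuous_id.prodMk continuous_const)).intervalIntegrable _ _
      · exact intervalIntegrable_const
    rw [hint]
    calc ‖∫ t in x₀..h θ, (f t θ - c)‖ ≤ ε * |h θ - x₀| :=
          intervalIntegral.norm_integral_le_of_norm_le_const hsub
      _ = ε * ‖h θ - x₀‖ := by rw [Real.norm_eq_abs]
  have hO : (fun θ => h θ - x₀) =O[nhds θ₀] fun θ => θ - θ₀ := by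
    simpa using hh.isBigO_sub
  have hA : (fun θ => (∫ t in x₀..h θ, f t θ) - (h θ - x₀) * c) =o[nhds θ₀]
      fun θ => θ - θ₀ := hA0.trans_isBigO hO
  have := hA.add hB
  refine this.congr' ?_ (by rfl)
  filter_upwards with θ
  simp only [smul_eq_mul, ← hx₀, intervalIntegral.integral_same]
  ring


/-- If a probabilistic inference is simultaneously consistent (the posterior is
assigned via the Consistency Theorem with a positive consistency factor `π`) and
exactly calibrated (the posterior equals `|∂F/∂θ| = -∂F/∂θ`), then the sampling
family is reducible, by separate one-to-one transformations `y = u x` of the sample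
space and `μ = v θ` of the parameter space, to a pure location family `φ (y - μ)`. -/
theorem consistent_and_calibrated_implies_location_family
    (f : ℝ → ℝ → ℝ)
    (hsmooth : ContDiff ℝ 2 (fun q : ℝ × ℝ => f q.1 q.2))
    (hfpos : ∀ x θ, 0 < f x θ)
    (hfnorm : ∀ θ, ∫ x, f x θ = 1)
    (F : ℝ → ℝ → ℝ)
    (hF : ∀ x θ, F x θ = ∫ t in Set.Iic x, f t θ)
    (π : ℝ → ℝ) (hπc : Continuous π) (hπpos : ∀ θ, 0 < π θ)
    (hπint : ∀ x, Integrable (fun θ => π θ * f x θ))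
    (hπipos : ∀ x, 0 < ∫ θ, π θ * f x θ)
    (hcalib : ∀ x θ,
      π θ * f x θ / (∫ θ', π θ' * f x θ') = -(deriv (fun ϑ => F x ϑ) θ)) :
    ∃ (u v φ : ℝ → ℝ),
      (StrictMono u ∨ StrictAnti u) ∧ Differentiable ℝ u ∧
      (StrictMono v ∨ StrictAnti v) ∧ Differentiable ℝ v ∧
      (∀ t, 0 ≤ φ t) ∧ (∫ t, φ t = 1) ∧
      ∀ x θ, f x θ = φ (u x - v θ) * deriv u x := by
  -- continuity of f
  have hfc : Continuous (fun q : ℝ × ℝ => f q.1 q.2) := hsmooth.continuous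
  have hfc1 : ∀ θ, Continuous (fun x => f x θ) := fun θ =>
    hfc.comp (continuous_id.prodMk continuous_const)
  have hfc2 : ∀ x, Continuous (fun θ => f x θ) := fun x =>
    hfc.comp (continuous_const.prodMk continuous_id)
  -- integrability in x
  have hInt : ∀ θ, Integrable (fun x => f x θ) := by
    intro θ
    by_contra hni
    have h := hfnorm θ
    rw [integral_undef hni] at h
    exact one_ne_zero h.symm
  set Z : ℝ → ℝ := fun x => ∫ θ, π θ * f x θ with hZ
  have hZpos : ∀ x, 0 < Z x := hπipos
  -- x-derivative of F
  have hFrep : ∀ x θ, F x θ = F 0 θ + ∫ t in (0:ℝ)..x, f t θ := by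
    intro x θ
    rw [hF, hF]
    rw [← intervalIntegral.integral_Iic_sub_Iic ((hInt θ).integrableOn)
      ((hInt θ).integrableOn)]
    ring
  have hFx : ∀ x θ, HasDerivAt (fun x' => F x' θ) (f x θ) x := by
    intro x θ
    have h1 : HasDerivAt (fun x' => F 0 θ + ∫ t in (0:ℝ)..x', f t θ) (f x θ) x :=
      (((hfc1 θ).integral_hasStrictDerivAt 0 x).hasDerivAt).const_add (F 0 θ)
    exact h1.congr_of_eventuallyEq (Eventually.of_forall fun x' => (hFrep x' θ))
  -- θ-derivative of F
  have hFθ : ∀ x θ, HasDerivAt (fun ϑ => F x ϑ) (-(π θ * f x θ / Z x)) θ := by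
    intro x θ
    have hne : deriv (fun ϑ => F x ϑ) θ ≠ 0 := by
      intro h0
      have := hcalib x θ
      rw [h0, neg_zero] at this
      have hpos : 0 < π θ * f x θ / Z x :=
        div_pos (mul_pos (hπpos θ) (hfpos x θ)) (hZpos x)
      rw [this] at hpos
      exact lt_irrefl 0 hpos
    have hdiff : DifferentiableAt ℝ (fun ϑ => F x ϑ) θ := by
      by_contra hnd
      exact hne (deriv_zero_of_not_differentiableAt hnd)
    have := hdiff.hasDerivAt
    have hc := hcalib x θ
    have hZx : (∫ θ', π θ' * f x θ') = Z x := rfl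
    rw [hZx] at hc
    rwa [show deriv (fun ϑ => F x ϑ) θ = -(π θ * f x θ / Z x) by linarith] at this
  -- the key integral identity
  have hstar : ∀ x θ, F x 0 - F x θ = (∫ s in (0:ℝ)..θ, π s * f x s) / Z x := by
    intro x θ
    have h1 : (∫ s in (0:ℝ)..θ, -(π s * f x s / Z x)) = F x θ - F x 0 :=
      intervalIntegral.integral_eq_sub_of_hasDerivAt
        (fun s _ => hFθ x s)
        (((((hπc.mul (hfc2 x)).div_const (Z x)).neg).intervalIntegrable 0 θ))
    have h2 : (∫ s in (0:ℝ)..θ, -(π s * f x s / Z x))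
        = -((∫ s in (0:ℝ)..θ, π s * f x s) / Z x) := by
      rw [intervalIntegral.integral_neg, intervalIntegral.integral_div]
    rw [h2] at h1
    linarith
  -- continuity of Z
  have hNcont : Continuous (fun x => ∫ s in (0:ℝ)..(1:ℝ), π s * f x s) := by
    apply continuous_parametric_intervalIntegral_of_continuous'
    exact (hπc.comp continuous_snd).mul hfc
  have hNpos : ∀ x, 0 < ∫ s in (0:ℝ)..(1:ℝ), π s * f x s := fun x =>
    intervalIntegral.intervalIntegral_pos_of_pos_on
      ((hπc.mul (hfc2 x)).intervalIntegrable 0 1)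
      (fun s _ => mul_pos (hπpos s) (hfpos x s)) one_pos
  have hDpos : ∀ x, 0 < F x 0 - F x 1 := by
    intro x
    rw [hstar x 1]
    exact div_pos (hNpos x) (hZpos x)
  have hZeq : ∀ x, Z x = (∫ s in (0:ℝ)..(1:ℝ), π s * f x s) / (F x 0 - F x 1) := by
    intro x
    have h := hstar x 1
    rw [eq_div_iff (ne_of_gt (hZpos x))] at h
    rw [eq_div_iff (ne_of_gt (hDpos x)), ← h]
    ring
  have hFcx : ∀ θ, Continuous (fun x => F x θ) := by
    intro θ
    exact continuous_iff_continuousAt.2 fun x => (hFx x θ).continuousAt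
  have hZcont : Continuous Z := by
    have : Continuous (fun x => (∫ s in (0:ℝ)..(1:ℝ), π s * f x s) / (F x 0 - F x 1)) :=
      hNcont.div ((hFcx 0).sub (hFcx 1)) (fun x => ne_of_gt (hDpos x))
    exact (funext hZeq : Z = _) ▸ this
  -- u and v
  set u : ℝ → ℝ := fun x => ∫ t in (0:ℝ)..x, Z t with hu
  set v : ℝ → ℝ := fun θ => ∫ s in (0:ℝ)..θ, π s with hv
  have hus : ∀ x, HasStrictDerivAt u (Z x) x := fun x =>
    hZcont.integral_hasStrictDerivAt 0 x
  have hvs : ∀ θ, HasStrictDerivAt v (π θ) θ := fun θ =>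
    hπc.integral_hasStrictDerivAt 0 θ
  have hud : ∀ x, deriv u x = Z x := fun x => (hus x).hasDerivAt.deriv
  have hvd : ∀ θ, deriv v θ = π θ := fun θ => (hvs θ).hasDerivAt.deriv
  have humono : StrictMono u := strictMono_of_deriv_pos (fun x => (hud x) ▸ hZpos x)
  have hvmono : StrictMono v := strictMono_of_deriv_pos (fun θ => (hvd θ) ▸ hπpos θ)
  have huc : Continuous u := continuous_iff_continuousAt.2 fun x => (hus x).hasDerivAt.continuousAt
  -- inverse of u
  classical
  set ginv : ℝ → ℝ := fun y => if h : ∃ x, u x = y then h.choose else 0 with hginv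
  have hginvu : ∀ x, ginv (u x) = x := by
    intro x
    have hex : ∃ x', u x' = u x := ⟨x, rfl⟩
    simp only [hginv, dif_pos hex]
    exact humono.injective hex.choose_spec
  have hginvy : ∀ y, (∃ x, u x = y) → u (ginv y) = y := by
    rintro y ⟨x, rfl⟩
    rw [hginvu]
  have hginvs : ∀ x, HasStrictDerivAt ginv (Z x)⁻¹ (u x) := fun x =>
    (hus x).to_local_left_inverse (ne_of_gt (hZpos x)) (Eventually.of_forall hginvu)
  have hrange_open : IsOpen (Set.range u) :=
    (isOpenMap_of_hasStrictDerivAt hus (fun x => ne_of_gt (hZpos x))).isOpen_range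
  -- bounds on F
  have hFinc : ∀ θ, StrictMono (fun x => F x θ) := fun θ =>
    strictMono_of_deriv_pos (fun x => ((hFx x θ).deriv) ▸ hfpos x θ)
  have hFnonneg : ∀ x θ, 0 ≤ F x θ := by
    intro x θ
    rw [hF]
    exact setIntegral_nonneg measurableSet_Iic (fun t _ => le_of_lt (hfpos t θ))
  have hFpos' : ∀ x θ, 0 < F x θ := by
    intro x θ
    have hsub : F x θ - F (x - 1) θ = ∫ t in (x-1)..x, f t θ := by
      rw [hFrep x θ, hFrep (x-1) θ]
      rw [show F 0 θ + (∫ t in (0:ℝ)..x, f t θ) - (F 0 θ + ∫ t in (0:ℝ)..(x-1), f t θ)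
        = (∫ t in (0:ℝ)..x, f t θ) - ∫ t in (0:ℝ)..(x-1), f t θ by ring]
      exact intervalIntegral.integral_interval_sub_left
        (((hfc1 θ)).intervalIntegrable 0 x) (((hfc1 θ)).intervalIntegrable 0 (x-1))
    have hpos : 0 < ∫ t in (x-1)..x, f t θ :=
      intervalIntegral.intervalIntegral_pos_of_pos_on ((hfc1 θ).intervalIntegrable _ _)
        (fun t _ => hfpos t θ) (by linarith)
    have := hFnonneg (x-1) θ
    linarith
  have hFle1 : ∀ x θ, F x θ ≤ 1 := by
    intro x θ
    rw [hF, ← hfnorm θ]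
    exact setIntegral_le_integral (hInt θ) (Eventually.of_forall fun t => le_of_lt (hfpos t θ))
  have hFlt1 : ∀ x θ, F x θ < 1 :=
    fun x θ => lt_of_lt_of_le (hFinc θ (lt_add_one x)) (hFle1 (x+1) θ)
  -- limits of F
  have hFtop : ∀ θ, Tendsto (fun x => F x θ) atTop (nhds 1) := by
    intro θ
    have h1 : Tendsto (fun x : ℝ => ∫ t in Set.Iic x, f t θ) atTop
        (nhds (∫ t in ⋃ x : ℝ, Set.Iic x, f t θ)) :=
      tendsto_setIntegral_of_monotone (fun _ => measurableSet_Iic)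
        (fun a b hab => Set.Iic_subset_Iic.2 hab)
        (by rw [Set.iUnion_Iic]; exact (hInt θ).integrableOn)
    rw [Set.iUnion_Iic, Measure.restrict_univ] at h1
    rw [hfnorm θ] at h1
    exact h1.congr (fun x => (hF x θ).symm)
  have hFbot : ∀ θ, Tendsto (fun x => F x θ) atBot (nhds 0) := by
    intro θ
    have hIempty : (⋂ n : ℕ, Set.Iic (-(n:ℝ))) = ∅ := by
      ext y
      simp only [Set.mem_iInter, Set.mem_Iic, Set.mem_empty_iff_false, iff_false, not_forall]
      rcases exists_nat_gt (-y) with ⟨n, hn⟩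
      exact ⟨n, by push_neg; linarith⟩
    have h1 : Tendsto (fun n : ℕ => ∫ t in Set.Iic (-(n:ℝ)), f t θ) atTop
        (nhds (∫ t in ⋂ n : ℕ, Set.Iic (-(n:ℝ)), f t θ)) :=
      Antitone.tendsto_setIntegral (fun _ => measurableSet_Iic)
        (fun a b hab => Set.Iic_subset_Iic.2 (by exact_mod_cast neg_le_neg (by exact_mod_cast hab)))
        ((hInt θ).integrableOn)
    rw [hIempty] at h1
    simp only [Measure.restrict_empty, integral_zero_measure] at h1
    have h2 : Tendsto (fun n : ℕ => F (-(n:ℝ)) θ) atTop (nhds 0) :=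
      h1.congr (fun n => (hF _ θ).symm)
    -- monotone convergence to the infimum
    have hbdd : BddBelow (Set.range (fun x => F x θ)) :=
      ⟨0, by rintro y ⟨x, rfl⟩; exact hFnonneg x θ⟩
    have h3 : Tendsto (fun x => F x θ) atBot (nhds (⨅ x, F x θ)) :=
      tendsto_atBot_ciInf (hFinc θ).monotone hbdd
    have h4 : Tendsto (fun n : ℕ => F (-(n:ℝ)) θ) atTop (nhds (⨅ x, F x θ)) := by
      apply h3.comp
      have : Tendsto (fun n : ℕ => (n:ℝ)) atTop atTop := tendsto_natCast_atTop_atTop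
      exact tendsto_neg_atBot_iff.2 this
    have h5 : (⨅ x, F x θ) = 0 := tendsto_nhds_unique h4 h2
    rwa [h5] at h3
  -- invariance of F along characteristics
  have hFdiff : ∀ a b θ, F a θ = F b θ + ∫ t in b..a, f t θ := by
    intro a b θ
    rw [hFrep a θ, hFrep b θ]
    have hsub : (∫ t in (0:ℝ)..a, f t θ) - ∫ t in (0:ℝ)..b, f t θ = ∫ t in b..a, f t θ :=
      intervalIntegral.integral_interval_sub_left
        ((hfc1 θ).intervalIntegrable 0 a) ((hfc1 θ).intervalIntegrable 0 b)
    linarith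
  have hInvLe : ∀ x₁ θ₁ x₂ θ₂, θ₁ ≤ θ₂ → u x₁ - v θ₁ = u x₂ - v θ₂ →
      F x₁ θ₁ = F x₂ θ₂ := by
    intro x₁ θ₁ x₂ θ₂ hle heq
    have hvle : v θ₁ ≤ v θ₂ := hvmono.monotone hle
    have hule : u x₁ ≤ u x₂ := by linarith
    set w : ℝ → ℝ := fun θ => u x₁ + (v θ - v θ₁) with hwdef
    set h : ℝ → ℝ := fun θ => ginv (w θ) with hhdef
    have hwmem : ∀ θ ∈ Set.Icc θ₁ θ₂, ∃ x, u x = w θ := by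
      intro θ hθ
      have h1 : w θ ∈ Set.uIcc (u x₁) (u x₂) := by
        rw [Set.uIcc_of_le hule]
        constructor
        · have := hvmono.monotone hθ.1; simp only [hwdef]; linarith
        · have := hvmono.monotone hθ.2; simp only [hwdef]; linarith
      have h2 := intermediate_value_uIcc (huc.continuousOn (s := Set.uIcc x₁ x₂)) h1
      obtain ⟨x, _, hx⟩ := h2
      exact ⟨x, hx⟩
    have hΨd : ∀ θ' ∈ Set.Icc θ₁ θ₂, HasDerivAt (fun θ => F (h θ) θ) 0 θ' := by
      intro θ' hθ'
      obtain ⟨xw, hxw⟩ := hwmem θ' hθ'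
      have hhval : h θ' = xw := by rw [hhdef]; simp only; rw [← hxw, hginvu]
      have hinner : HasDerivAt w (π θ') θ' := by
        exact (((hvs θ').hasDerivAt.sub_const (v θ₁)).const_add (u x₁))
      have houter : HasDerivAt ginv (Z xw)⁻¹ (w θ') := by
        rw [← hxw]; exact (hginvs xw).hasDerivAt
      have hh' : HasDerivAt h ((Z xw)⁻¹ * π θ') θ' := houter.comp θ' hinner
      have hdecomp : ∀ θ, F (h θ) θ = F (h θ') θ + ∫ t in (h θ')..(h θ), f t θ :=
        fun θ => hFdiff (h θ) (h θ') θ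
      have hkey : HasDerivAt (fun θ => ∫ t in (h θ')..(h θ), f t θ)
          (f (h θ') θ' * ((Z xw)⁻¹ * π θ')) θ' := key_hasDerivAt f hfc hh'
      have hA : HasDerivAt (fun θ => F (h θ') θ) (-(π θ' * f (h θ') θ' / Z (h θ'))) θ' :=
        hFθ (h θ') θ'
      have hsum := hA.add hkey
      have hval : -(π θ' * f (h θ') θ' / Z (h θ')) + f (h θ') θ' * ((Z xw)⁻¹ * π θ') = 0 := by
        rw [hhval]
        field_simp [ne_of_gt (hZpos xw)]
        ring
      rw [hval] at hsum
      exact hsum.congr_of_eventuallyEq (Eventually.of_forall fun θ => hdecomp θ)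
    have hcont : ContinuousOn (fun θ => F (h θ) θ) (Set.Icc θ₁ θ₂) :=
      fun θ hθ => ((hΨd θ hθ).continuousAt).continuousWithinAt
    have hconst := constant_of_has_deriv_right_zero hcont
      (fun θ hθ => ((hΨd θ (Set.Ico_subset_Icc_self hθ)).hasDerivWithinAt))
    have h2 := hconst θ₂ (Set.right_mem_Icc.2 hle)
    have hh1 : h θ₁ = x₁ := by
      simp only [hhdef, hwdef]
      rw [show u x₁ + (v θ₁ - v θ₁) = u x₁ by ring, hginvu]
    have hh2 : h θ₂ = x₂ := by
      simp only [hhdef, hwdef]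
      rw [show u x₁ + (v θ₂ - v θ₁) = u x₂ by linarith, hginvu]
    rw [hh1, hh2] at h2
    exact h2.symm
  have hInv : ∀ x₁ θ₁ x₂ θ₂, u x₁ - v θ₁ = u x₂ - v θ₂ → F x₁ θ₁ = F x₂ θ₂ := by
    intro x₁ θ₁ x₂ θ₂ heq
    rcases le_total θ₁ θ₂ with hle | hle
    · exact hInvLe x₁ θ₁ x₂ θ₂ hle heq
    · exact (hInvLe x₂ θ₂ x₁ θ₁ hle heq.symm).symm
  -- invariance of f/Z along characteristics
  have hkInv : ∀ x₁ θ₁ x₂ θ₂, u x₁ - v θ₁ = u x₂ - v θ₂ →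
      f x₁ θ₁ * Z x₂ = f x₂ θ₂ * Z x₁ := by
    intro x₁ θ₁ x₂ θ₂ heq
    have hev : ∀ᶠ y in nhds (0:ℝ), (∃ x, u x = u x₁ + y) ∧ (∃ x, u x = u x₂ + y) := by
      have h1 : IsOpen {y : ℝ | u x₁ + y ∈ Set.range u} :=
        hrange_open.preimage (continuous_const.add continuous_id)
      have h2 : IsOpen {y : ℝ | u x₂ + y ∈ Set.range u} :=
        hrange_open.preimage (continuous_const.add continuous_id)
      have m1 : (0:ℝ) ∈ {y : ℝ | u x₁ + y ∈ Set.range u} := by simp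
      have m2 : (0:ℝ) ∈ {y : ℝ | u x₂ + y ∈ Set.range u} := by simp
      filter_upwards [h1.mem_nhds m1, h2.mem_nhds m2] with y hy1 hy2
      exact ⟨hy1, hy2⟩
    have heq' : (fun y => F (ginv (u x₁ + y)) θ₁) =ᶠ[nhds (0:ℝ)]
        (fun y => F (ginv (u x₂ + y)) θ₂) := by
      filter_upwards [hev] with y hy
      obtain ⟨hy1, hy2⟩ := hy
      apply hInv
      rw [hginvy _ hy1, hginvy _ hy2]
      linarith
    have hder : ∀ (x₀ : ℝ) (θ₀ : ℝ), HasDerivAt (fun y => F (ginv (u x₀ + y)) θ₀)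
        (f x₀ θ₀ * ((Z x₀)⁻¹ * 1)) 0 := by
      intro x₀ θ₀
      have hinner : HasDerivAt (fun y : ℝ => u x₀ + y) 1 0 := by
        simpa using (hasDerivAt_id (0:ℝ)).const_add (u x₀)
      have hmid : HasDerivAt ginv (Z x₀)⁻¹ (u x₀ + 0) := by
        rw [add_zero]; exact (hginvs x₀).hasDerivAt
      have hcomp1 : HasDerivAt (fun y => ginv (u x₀ + y)) ((Z x₀)⁻¹ * 1) 0 :=
        hmid.comp 0 hinner
      have houter : HasDerivAt (fun x' => F x' θ₀) (f x₀ θ₀) (ginv (u x₀ + 0)) := by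
        rw [add_zero, hginvu]; exact hFx x₀ θ₀
      exact houter.comp 0 hcomp1
    have hd1 := hder x₁ θ₁
    have hd2 := hder x₂ θ₂
    have hd1' : HasDerivAt (fun y => F (ginv (u x₂ + y)) θ₂)
        (f x₁ θ₁ * ((Z x₁)⁻¹ * 1)) 0 := by
      exact (Filter.EventuallyEq.hasDerivAt_iff heq').1 hd1
    have huniq := hd1'.unique hd2
    rw [mul_one, mul_one] at huniq
    have hz1 := ne_of_gt (hZpos x₁)
    have hz2 := ne_of_gt (hZpos x₂)
    field_simp at huniq
    linarith
  -- u is surjective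
  have hnba : ¬ BddAbove (Set.range u) := by
    intro hba
    set b := ⨆ x, u x with hb
    have hlt : ∀ x, u x < b :=
      fun x => lt_of_lt_of_le (humono (lt_add_one x)) (le_ciSup hba (x+1))
    have htop : Tendsto u atTop (nhds b) := tendsto_atTop_ciSup humono.monotone hba
    have hb0 : 0 < b - u 0 := by have := hlt 0; linarith
    -- choose θp > 0 with 0 < v θp - v 0 < b - u 0
    obtain ⟨δ, hδ, hball⟩ := Metric.continuousAt_iff.1 (hvs 0).hasDerivAt.continuousAt
      (b - u 0) hb0
    set θp := δ/2 with hθp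
    have hθp_pos : 0 < θp := by positivity
    have hc1 : |v θp - v 0| < b - u 0 := by
      have : dist θp 0 < δ := by
        rw [Real.dist_eq, sub_zero, abs_of_pos hθp_pos]; linarith
      simpa [Real.dist_eq] using hball this
    set c' := v θp - v 0 with hc'
    have hc'pos : 0 < c' := by have := hvmono hθp_pos; simp only [hc']; linarith
    have hc'lt : c' < b - u 0 := lt_of_le_of_lt (le_abs_self _) hc1
    -- the limit point
    have hbc_mem : ∃ xs, u xs = b - c' := by
      obtain ⟨x₂, hx₂⟩ := exists_lt_of_lt_ciSup (show b - c' < b by linarith)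
      have : b - c' ∈ Set.uIcc (u 0) (u x₂) := by
        rw [Set.uIcc_of_le (le_of_lt (lt_trans (by linarith) hx₂))]
        exact ⟨by linarith, le_of_lt hx₂⟩
      obtain ⟨xs, _, hxs⟩ := intermediate_value_uIcc (huc.continuousOn) this
      exact ⟨xs, hxs⟩
    obtain ⟨xs, hxs⟩ := hbc_mem
    -- eventual pairing
    obtain ⟨x₀, hx₀⟩ := exists_lt_of_lt_ciSup (show u 0 + c' < b by linarith)
    have hpair : ∀ᶠ x₁ in atTop, F x₁ θp = F (ginv (u x₁ - c')) 0 := by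
      rw [eventually_atTop]
      refine ⟨x₀, fun x₁ hx₁ => ?_⟩
      have hux₁ : u 0 + c' < u x₁ := lt_of_lt_of_le hx₀ (humono.monotone hx₁)
      have hmem : ∃ xx, u xx = u x₁ - c' := by
        have : u x₁ - c' ∈ Set.uIcc (u 0) (u x₁) := by
          rw [Set.uIcc_of_le (le_of_lt (by linarith : u 0 < u x₁))]
          exact ⟨by linarith, by linarith⟩
        obtain ⟨xx, _, hxx⟩ := intermediate_value_uIcc (huc.continuousOn) this
        exact ⟨xx, hxx⟩
      apply hInv
      rw [hginvy _ hmem]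
      simp only [hc']
      ring
    have h2 : Tendsto (fun x₁ => F (ginv (u x₁ - c')) 0) atTop (nhds (F xs 0)) := by
      have t1 : Tendsto (fun x₁ => u x₁ - c') atTop (nhds (u xs)) := by
        rw [hxs]; exact htop.sub_const c'
      have t2 : Tendsto (fun x₁ => ginv (u x₁ - c')) atTop (nhds xs) := by
        have hc : ContinuousAt ginv (u xs) := (hginvs xs).hasDerivAt.continuousAt
        have := hc.tendsto.comp t1
        rwa [hginvu] at this
      exact ((hFcx 0).continuousAt.tendsto.comp t2)
    have h1 : Tendsto (fun x₁ => F x₁ θp) atTop (nhds 1) := hFtop θp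
    have h3 : Tendsto (fun x₁ => F x₁ θp) atTop (nhds (F xs 0)) :=
      h2.congr' (hpair.mono fun x₁ hx₁ => hx₁.symm)
    have : (1:ℝ) = F xs 0 := tendsto_nhds_unique h1 h3
    exact absurd this.symm (ne_of_lt (hFlt1 xs 0))
  have hnbb : ¬ BddBelow (Set.range u) := by
    intro hbb
    set a := ⨅ x, u x with ha
    have hgt : ∀ x, a < u x :=
      fun x => lt_of_le_of_lt (ciInf_le hbb (x-1)) (humono (by linarith))
    have hbot : Tendsto u atBot (nhds a) := tendsto_atBot_ciInf humono.monotone hbb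
    set c' := v 0 - v (-1) with hc'
    have hc'pos : 0 < c' := by have := hvmono (show (-1:ℝ) < 0 by norm_num); simp only [hc']; linarith
    have hmem_up : ∀ y : ℝ, a < y → ∃ xx, u xx = y := by
      intro y hy
      obtain ⟨x₂, hx₂⟩ : ∃ x₂, y < u x₂ := by
        rcases not_bddAbove_iff.1 hnba y with ⟨z, ⟨x₂, rfl⟩, hz⟩
        exact ⟨x₂, hz⟩
      obtain ⟨x₁, hx₁⟩ := exists_lt_of_ciInf_lt (show a < y from hy)
      have : y ∈ Set.uIcc (u x₁) (u x₂) := by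
        rw [Set.uIcc_of_le (le_of_lt (lt_trans hx₁ hx₂))]
        exact ⟨le_of_lt hx₁, le_of_lt hx₂⟩
      obtain ⟨xx, _, hxx⟩ := intermediate_value_uIcc (huc.continuousOn) this
      exact ⟨xx, hxx⟩
    obtain ⟨xs, hxs⟩ := hmem_up (a + c') (by linarith)
    have hpair : ∀ x₁, F x₁ (-1) = F (ginv (u x₁ + c')) 0 := by
      intro x₁
      have hmem : ∃ xx, u xx = u x₁ + c' := hmem_up _ (by have := hgt x₁; linarith)
      apply hInv
      rw [hginvy _ hmem]
      simp only [hc']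
      ring
    have h2 : Tendsto (fun x₁ => F (ginv (u x₁ + c')) 0) atBot (nhds (F xs 0)) := by
      have t1 : Tendsto (fun x₁ => u x₁ + c') atBot (nhds (u xs)) := by
        rw [hxs]; exact hbot.add_const c'
      have t2 : Tendsto (fun x₁ => ginv (u x₁ + c')) atBot (nhds xs) := by
        have hc : ContinuousAt ginv (u xs) := (hginvs xs).hasDerivAt.continuousAt
        have := hc.tendsto.comp t1
        rwa [hginvu] at this
      exact ((hFcx 0).continuousAt.tendsto.comp t2)
    have h1 : Tendsto (fun x₁ => F x₁ (-1)) atBot (nhds 0) := hFbot (-1)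
    have h3 : Tendsto (fun x₁ => F x₁ (-1)) atBot (nhds (F xs 0)) :=
      h2.congr (fun x₁ => (hpair x₁).symm)
    have : (0:ℝ) = F xs 0 := tendsto_nhds_unique h1 h3
    exact absurd this (ne_of_lt (hFpos' xs 0))
  have husurj : Function.Surjective u := by
    intro y
    obtain ⟨z₂, ⟨x₂, rfl⟩, hz₂⟩ := not_bddAbove_iff.1 hnba y
    obtain ⟨z₁, ⟨x₁, rfl⟩, hz₁⟩ := not_bddBelow_iff.1 hnbb y
    have : y ∈ Set.uIcc (u x₁) (u x₂) := by
      rw [Set.uIcc_of_le (le_of_lt (lt_trans hz₁ hz₂))]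
      exact ⟨le_of_lt hz₁, le_of_lt hz₂⟩
    obtain ⟨x, _, hx⟩ := intermediate_value_uIcc (huc.continuousOn) this
    exact ⟨x, hx⟩
  -- the location density
  set φ : ℝ → ℝ := fun t => f (ginv (t + v 0)) 0 / Z (ginv (t + v 0)) with hφ
  have hφnonneg : ∀ t, 0 ≤ φ t := fun t => le_of_lt (div_pos (hfpos _ 0) (hZpos _))
  have hmain : ∀ x θ, f x θ = φ (u x - v θ) * Z x := by
    intro x θ
    obtain ⟨x', hx'⟩ := husurj (u x - v θ + v 0)
    have hg : ginv (u x - v θ + v 0) = x' := by rw [← hx', hginvu]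
    have hpair : u x' - v 0 = u x - v θ := by rw [hx']; ring
    have hk := hkInv x' 0 x θ hpair
    simp only [hφ, hg]
    have hz1 := ne_of_gt (hZpos x')
    have hz2 := ne_of_gt (hZpos x)
    field_simp
    linarith
  have hnorm : ∫ t, φ t = 1 := by
    have hcv := integral_image_eq_integral_abs_deriv_smul (MeasurableSet.univ)
      (fun x (_ : x ∈ Set.univ) => (hus x).hasDerivAt.hasDerivWithinAt)
      (humono.injective.injOn) (fun t => φ (t - v 0))
    rw [Set.image_univ, Set.range_eq_univ.2 husurj, Measure.restrict_univ] at hcv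
    have hr : ∀ x, |Z x| • φ (u x - v 0) = f x 0 := by
      intro x
      rw [abs_of_pos (hZpos x), smul_eq_mul, mul_comm, ← hmain x 0]
    rw [integral_congr_ae (Eventually.of_forall hr), hfnorm 0] at hcv
    rw [← integral_sub_right_eq_self φ (v 0)]
    exact hcv
  exact ⟨u, v, φ, Or.inl humono, fun x => (hus x).hasDerivAt.differentiableAt,
    Or.inl hvmono, fun θ => (hvs θ).hasDerivAt.differentiableAt,
    hφnonneg, hnorm, fun x θ => by rw [hud x]; exact hmain x θ⟩
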